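/- For every integer d ≥ 2, the optimal value of the linear program: maximize p₁ over nonnegative reals p₁, p₂, p₃, p₄ subject to (1/(d−1))·(p₂ + p₄/(d+1)) ≥ p₁ + p₃/(d+1), (1/(d−1))·(p₃ + p₄/(d+1)) ≥ p₁ + p₂/(d+1), p₁ + p₄/(d−1)² ≥ (p₂ + p₃)/(d−1), and p₁ + p₂ + p₃ + p₄ = 1, equals 1/d²; that is, every feasible point satisfies p₁ ≤ 1/d², and the value 1/d² is attained, e.g., at p₁ = 1/d², p₂ = p₃ = 0, p₄ = 1 − 1/d². -/
import Mathlib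


/-- the linear program arising from PPT simulation of the `d`-dimensional
swap channel with no resource state has optimal value `1/d²`: every feasible point
satisfies `p₁ ≤ 1/d²`, and this value is attained (e.g. at
`p₁ = 1/d², p₂ = p₃ = 0, p₄ = 1 − 1/d²`). -/
theorem stmt0 (d : ℤ) (hd : 2 ≤ d) :
    IsGreatest {p₁ : ℝ | ∃ p₂ p₃ p₄ : ℝ, 0 ≤ p₁ ∧ 0 ≤ p₂ ∧ 0 ≤ p₃ ∧ 0 ≤ p₄ ∧
        p₁ + p₃ / ((d : ℝ) + 1) ≤ (1 / ((d : ℝ) - 1)) * (p₂ + p₄ / ((d : ℝ) + 1)) ∧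
        p₁ + p₂ / ((d : ℝ) + 1) ≤ (1 / ((d : ℝ) - 1)) * (p₃ + p₄ / ((d : ℝ) + 1)) ∧
        (p₂ + p₃) / ((d : ℝ) - 1) ≤ p₁ + p₄ / ((d : ℝ) - 1) ^ 2 ∧
        p₁ + p₂ + p₃ + p₄ = 1}
      (1 / (d : ℝ) ^ 2) := by
  have hd' : (2:ℝ) ≤ (d:ℝ) := by exact_mod_cast hd
  have h1 : (0:ℝ) < (d:ℝ) - 1 := by linarith
  have h2 : (0:ℝ) < (d:ℝ) + 1 := by linarith
  have h0 : (0:ℝ) < (d:ℝ) := by linarith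
  constructor
  · refine ⟨0, 0, 1 - 1 / (d:ℝ)^2, ?_, le_refl 0, le_refl 0, ?_, ?_, ?_, ?_, ?_⟩
    · positivity
    · have : 1 / (d:ℝ)^2 ≤ 1 := by
        rw [div_le_one (by positivity)]
        nlinarith
      linarith
    · apply le_of_eq
      field_simp
      ring
    · apply le_of_eq
      field_simp
      ring
    · have hp : (0:ℝ) ≤ 1 - 1 / (d:ℝ)^2 := by
        have : 1 / (d:ℝ)^2 ≤ 1 := by
          rw [div_le_one (by positivity)]
          nlinarith
        linarith
      have : (0:ℝ) ≤ 1 / (d:ℝ)^2 + (1 - 1 / (d:ℝ)^2) / ((d:ℝ)-1)^2 := by positivity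
      simpa using this
    · ring
  · rintro p₁ ⟨p₂, p₃, p₄, hp1, hp2, hp3, hp4, hA, hB, hC, hsum⟩
    have hA' : ((d:ℝ)^2 - 1) * p₁ + ((d:ℝ) - 1) * p₃ ≤ ((d:ℝ) + 1) * p₂ + p₄ := by
      rw [one_div, inv_mul_eq_div, le_div_iff₀ h1] at hA
      have := mul_le_mul_of_nonneg_right hA (le_of_lt h2)
      field_simp at this
      nlinarith [this]
    have hB' : ((d:ℝ)^2 - 1) * p₁ + ((d:ℝ) - 1) * p₂ ≤ ((d:ℝ) + 1) * p₃ + p₄ := by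
      rw [one_div, inv_mul_eq_div, le_div_iff₀ h1] at hB
      have := mul_le_mul_of_nonneg_right hB (le_of_lt h2)
      field_simp at this
      nlinarith [this]
    rw [le_div_iff₀ (by positivity : (0:ℝ) < (d:ℝ)^2)]
    nlinarith [hA', hB', hsum]
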